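/- Let n ≥ 1 and T ≥ 2n be real, and set Tr_min = (T − √(T² − 4n²))/2 and Tr_max = (T + √(T² − 4n²))/2. Suppose (d_j)_{j∈ℤ} is a bi-infinite sequence of real symmetric positive definite n×n matrices and (β_j)_{j∈ℤ} a sequence of real symmetric n×n matrices with d_{j+1} = β_{j+1} − d_j⁻¹ and Tr(β_j) ≤ T for all j ∈ ℤ. Then Tr_min ≤ Tr(d_j) ≤ Tr_max for every j ∈ ℤ. -/

import Mathlib

open Matrix

lemma trace_conj_diag {n : ℕ} (U : Matrix.unitaryGroup (Fin n) ℝ) (f : Fin n → ℝ) :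
    ((U : Matrix (Fin n) (Fin n) ℝ) * diagonal f * star (U : Matrix (Fin n) (Fin n) ℝ)).trace
      = ∑ i, f i := by
  rw [trace_mul_comm, ← mul_assoc, Unitary.coe_star_mul_self, one_mul, trace_diagonal]

lemma herm_trace {n : ℕ} {A : Matrix (Fin n) (Fin n) ℝ} (hA : A.IsHermitian) :
    A.trace = ∑ i, hA.eigenvalues i := by
  nth_rw 1 [hA.spectral_theorem]
  rw [Unitary.conjStarAlgAut_apply, trace_conj_diag]
  rfl

lemma inv_trace_eq {n : ℕ} {A : Matrix (Fin n) (Fin n) ℝ} (hA : A.PosDef) :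
    A⁻¹.trace = ∑ i, (hA.1.eigenvalues i)⁻¹ := by
  have h1 : A⁻¹ = (hA.1.eigenvectorUnitary : Matrix (Fin n) (Fin n) ℝ) *
      diagonal (fun i => (hA.1.eigenvalues i)⁻¹) *
      star (hA.1.eigenvectorUnitary : Matrix (Fin n) (Fin n) ℝ) := by
    apply inv_eq_right_inv
    nth_rw 1 [hA.1.spectral_theorem]
    rw [Unitary.conjStarAlgAut_apply]
    simp only [mul_assoc]
    rw [← mul_assoc (star _) _ _, Unitary.coe_star_mul_self, one_mul,
      ← mul_assoc (diagonal _) (diagonal _), diagonal_mul_diagonal]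
    have : (fun i => (RCLike.ofReal ∘ hA.1.eigenvalues) i * (hA.1.eigenvalues i)⁻¹)
        = fun _ => (1:ℝ) := by
      funext i
      simp [mul_inv_cancel₀ (hA.eigenvalues_pos i).ne']
    rw [this, diagonal_one, one_mul]
    exact Matrix.mem_unitaryGroup_iff.mp hA.1.eigenvectorUnitary.2
  rw [h1, trace_conj_diag]

lemma aux_false (a b : ℝ) (ha : 0 < a) (hab : a ≤ b) (s : ℕ → ℝ)
    (h0 : 0 < s 0) (hsa : ∀ k, s k < a)
    (hstep : ∀ k, b * s k ≤ (a - s k) * s (k + 1)) : False := by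
  have ha0 : 0 < a - s 0 := by linarith [hsa 0]
  have hr : 1 < b / (a - s 0) := (one_lt_div ha0).mpr (by linarith)
  set r := b / (a - s 0) with hrdef
  have key : ∀ k, s 0 * r ^ k ≤ s k := by
    intro k; induction k with
    | zero => simp
    | succ k ih =>
      have hrk : 1 ≤ r ^ k := one_le_pow₀ hr.le
      have hk0 : s 0 ≤ s k := le_trans (by nlinarith) ih
      have hks : 0 < s k := lt_of_lt_of_le h0 hk0
      have h1 : 0 < a - s k := by linarith [hsa k]
      have h2 := hstep k
      have h3 : r * s k ≤ s (k + 1) := by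
        rw [hrdef, div_mul_eq_mul_div, div_le_iff₀ ha0]
        have hsk1 : 0 < s (k + 1) := by nlinarith
        nlinarith
      calc s 0 * r ^ (k + 1) = r * (s 0 * r ^ k) := by ring
        _ ≤ r * s k := by nlinarith
        _ ≤ s (k + 1) := h3
  obtain ⟨k, hk⟩ := pow_unbounded_of_one_lt (a / s 0) hr
  have h4 := key k
  have h5 := hsa k
  rw [div_lt_iff₀ h0] at hk
  nlinarith

theorem stmt13 {n : ℕ} (hn : 1 ≤ n) (T : ℝ) (hT : 2 * (n : ℝ) ≤ T)
    (d β : ℤ → Matrix (Fin n) (Fin n) ℝ)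
    (hd : ∀ j, (d j).PosDef)
    (hβ : ∀ j, (β j).IsHermitian)
    (hrec : ∀ j : ℤ, d (j + 1) = β (j + 1) - (d j)⁻¹)
    (hTr : ∀ j, (β j).trace ≤ T) :
    ∀ j : ℤ, (T - Real.sqrt (T ^ 2 - 4 * (n : ℝ) ^ 2)) / 2 ≤ (d j).trace ∧
      (d j).trace ≤ (T + Real.sqrt (T ^ 2 - 4 * (n : ℝ) ^ 2)) / 2 := by
  have hn' : (1:ℝ) ≤ (n:ℝ) := by exact_mod_cast hn
  have hdisc : (0:ℝ) ≤ T ^ 2 - 4 * (n : ℝ) ^ 2 := by nlinarith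
  set q := Real.sqrt (T ^ 2 - 4 * (n : ℝ) ^ 2) with hq
  have hq0 : 0 ≤ q := Real.sqrt_nonneg _
  have hq2 : q ^ 2 = T ^ 2 - 4 * (n : ℝ) ^ 2 := Real.sq_sqrt hdisc
  have hqT : q < T := by
    rw [hq]
    rw [show (T ^ 2 - 4 * (n:ℝ) ^ 2) = (T - 2*n) * (T + 2*n) by ring]
    exact (Real.sqrt_lt' (by nlinarith)).mpr (by nlinarith)
  set a := (T - q) / 2 with hadef
  set b := (T + q) / 2 with hbdef
  have ha : 0 < a := by rw [hadef]; linarith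
  have hab : a ≤ b := by rw [hadef, hbdef]; linarith
  have hsum : a + b = T := by rw [hadef, hbdef]; ring
  have hprod : a * b = (n:ℝ) ^ 2 := by rw [hadef, hbdef]; nlinarith
  -- trace positivity
  have htpos : ∀ j, 0 < (d j).trace := by
    intro j
    rw [herm_trace (hd j).1]
    exact Finset.sum_pos (fun i _ => (hd j).eigenvalues_pos i) ⟨⟨0, hn⟩, Finset.mem_univ _⟩
  -- Cauchy-Schwarz: n² ≤ tr(M) tr(M⁻¹)
  have hCS : ∀ j, (n:ℝ) ^ 2 ≤ (d j).trace * (d j)⁻¹.trace := by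
    intro j
    rw [herm_trace (hd j).1, inv_trace_eq (hd j)]
    have := Finset.sum_sq_le_sum_mul_sum_of_sq_eq_mul (Finset.univ : Finset (Fin n))
      (r := fun _ => (1:ℝ)) (f := fun i => (hd j).1.eigenvalues i)
      (g := fun i => ((hd j).1.eigenvalues i)⁻¹)
      (fun i _ => ((hd j).eigenvalues_pos i).le)
      (fun i _ => (inv_pos.mpr ((hd j).eigenvalues_pos i)).le)
      (fun i _ => by
        simp [mul_inv_cancel₀ ((hd j).eigenvalues_pos i).ne'])
    simpa using this
  have hinvpos : ∀ j, 0 < (d j)⁻¹.trace := by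
    intro j
    have h1 := hCS j
    have h2 := htpos j
    nlinarith
  -- trace recursion
  have hrecT : ∀ j : ℤ, (d (j + 1)).trace = (β (j + 1)).trace - (d j)⁻¹.trace := by
    intro j; rw [hrec j, trace_sub]
  -- key product inequality: t_i * t_{i+1} ≤ t_i * T - n²
  have hkey : ∀ i : ℤ, (d i).trace * (d (i + 1)).trace ≤ (d i).trace * T - a * b := by
    intro i
    rw [hprod, hrecT i]
    have h1 := hCS i
    have h2 := htpos i
    have h3 := hTr (i + 1)
    nlinarith
  -- everyone below T
  have hTlt : ∀ i : ℤ, (d i).trace < T := by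
    intro i
    have h1 := hrecT (i - 1)
    rw [show i - 1 + 1 = i by ring] at h1
    have h2 := hinvpos (i - 1)
    have h3 := hTr i
    linarith
  intro j
  constructor
  · -- lower bound: t j ≥ a
    by_contra hcon
    push_neg at hcon
    refine aux_false a b ha hab (fun k => a - (d (j + k)).trace) ?_ ?_ ?_
    · simpa using by linarith
    · intro k
      show a - (d (j + (k:ℤ))).trace < a
      have := htpos (j + k); linarith
    · intro k
      show b * (a - (d (j + (k:ℤ))).trace) ≤
        (a - (a - (d (j + (k:ℤ))).trace)) * (a - (d (j + ((k:ℕ) + 1 : ℕ))).trace)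
      have h1 := hkey (j + k)
      have h2 := htpos (j + k)
      rw [show (j + (k:ℤ)) + 1 = j + ((k:ℕ) + 1 : ℕ) by push_cast; ring] at h1
      nlinarith [h1, h2, hsum, hprod]
  · -- upper bound: t j ≤ b
    by_contra hcon
    push_neg at hcon
    refine aux_false a b ha hab (fun k => (d (j - k)).trace - b) ?_ ?_ ?_
    · simpa using by linarith
    · intro k
      show (d (j - (k:ℤ))).trace - b < a
      have := hTlt (j - k); linarith [hsum]
    · intro k
      show b * ((d (j - (k:ℤ))).trace - b) ≤
        (a - ((d (j - (k:ℤ))).trace - b)) * ((d (j - ((k:ℕ) + 1 : ℕ))).trace - b)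
      have h1 := hkey (j - ((k:ℕ) + 1 : ℕ))
      have h2 := htpos (j - ((k:ℕ) + 1 : ℕ))
      rw [show (j - ((k:ℕ) + 1 : ℕ) : ℤ) + 1 = j - k by push_cast; ring] at h1
      nlinarith [h1, h2, hsum, hprod]
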